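/- (Correctness of compiled variable elimination on a chain.) Let n : ℕ, let S k be a finite nonempty state space for each k = 0, 1, …, n, let π : S 0 → ℝ≥0 be an initial weight vector, let M k : S (k+1) → S k → ℝ≥0 be transition matrices for k = 0, …, n−1, and let R k ⊆ S k be query regions. Define vectors recursively by v 0 x = π x if x ∈ R 0 and v 0 x = 0 otherwise, and v (k+1) y = ∑_{x : S k} M k y x · v k x if y ∈ R (k+1) and v (k+1) y = 0 otherwise. Then the column sum of the final vector computes the constrained trajectory sum: ∑_{y : S n} v n y = ∑ over all trajectories t with t k ∈ S k and t k ∈ R k for every k of π (t 0) · ∏_{k=0}^{n−1} M k (t (k+1)) (t k). -/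

import Mathlib

open scoped NNReal
open Finset

/-- The compiled variable-elimination program on a chain: `VEvec S π M R k` is the
vector obtained after processing attributes `0, …, k`, slicing by the query regions
`R` at each step. -/
noncomputable def VEvec (S : ℕ → Type) [∀ k, Fintype (S k)] [∀ k, DecidableEq (S k)]
    (π : S 0 → ℝ≥0) (M : ∀ k, S (k + 1) → S k → ℝ≥0) (R : ∀ k, Finset (S k)) :
    ∀ k, S k → ℝ≥0
  | 0 => fun x => if x ∈ R 0 then π x else 0
  | (k + 1) => fun y =>
      if y ∈ R (k + 1) then ∑ x, M k y x * VEvec S π M R k x else 0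

lemma VE_weighted (S : ℕ → Type) [∀ k, Fintype (S k)] [∀ k, DecidableEq (S k)]
    (π : S 0 → ℝ≥0) (M : ∀ k, S (k + 1) → S k → ℝ≥0) (R : ∀ k, Finset (S k)) :
    ∀ (n : ℕ) (w : S n → ℝ≥0),
    ∑ x, w x * VEvec S π M R n x
      = ∑ t ∈ Finset.univ.filter
            (fun t : (k : Fin (n + 1)) → S k => ∀ k : Fin (n + 1), t k ∈ R k),
          w (t (Fin.last n)) *
            (π (t ⟨0, Nat.succ_pos n⟩) *
              ∏ k : Fin n, M k (t ⟨k.val + 1, Nat.succ_lt_succ k.isLt⟩) (t ⟨k.val, Nat.lt_succ_of_lt k.isLt⟩)) := by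
  intro n
  induction n with
  | zero =>
    intro w
    rw [Finset.sum_filter, ← (Fin.snocEquiv (fun k : Fin 1 => S k)).sum_comp,
        Fintype.sum_prod_type]
    refine Finset.sum_congr rfl fun y _ => ?_
    rw [Fintype.sum_unique]
    simp only [Fin.snocEquiv_apply, VEvec]
    have hc : (∀ k : Fin 1,
        (Fin.snoc (α := fun k : Fin 1 => S k) default y) k ∈ R k) ↔ y ∈ R 0 := by
      constructor
      · intro h
        have := h (Fin.last 0)
        rwa [Fin.snoc_last] at this
      · intro h k
        have hk : k = Fin.last 0 := Subsingleton.elim _ _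
        subst hk
        rwa [Fin.snoc_last]
    rw [if_congr hc rfl rfl]
    by_cases h : y ∈ R 0
    · rw [if_pos h, if_pos h]
      have h1 : (Fin.snoc (α := fun k : Fin 1 => S k) default y (Fin.last 0)) = y :=
        Fin.snoc_last (α := fun k : Fin 1 => S k) (p := default) (x := y)
      show w y * π y = w (Fin.snoc (α := fun k : Fin 1 => S k) default y (Fin.last 0)) *
        (π (Fin.snoc (α := fun k : Fin 1 => S k) default y (Fin.last 0)) * ∏ k : Fin 0,
          M k (Fin.snoc (α := fun k : Fin 1 => S k) default y ⟨k.val + 1, by omega⟩)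
            (Fin.snoc (α := fun k : Fin 1 => S k) default y ⟨k.val, by omega⟩))
      rw [h1, Fin.prod_univ_zero, mul_one]
    · rw [if_neg h, if_neg h, mul_zero]
  | succ n ih =>
    intro w
    have hsnoc : ∀ (t : ∀ i : Fin (n + 1), S i) (y : S (n + 1)) (i : ℕ) (hi : i < n + 1),
        (Fin.snoc (α := fun i : Fin (n + 2) => S i) t y ⟨i, Nat.lt_succ_of_lt hi⟩)
          = t ⟨i, hi⟩ :=
      fun t y i hi => Fin.snoc_castSucc (α := fun i : Fin (n + 2) => S i) (p := t) (x := y) (i := ⟨i, hi⟩)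
    rw [Finset.sum_filter, ← (Fin.snocEquiv (fun k : Fin (n + 2) => S k)).sum_comp,
        Fintype.sum_prod_type]
    simp only [VEvec]
    refine Finset.sum_congr rfl fun y _ => ?_
    by_cases hy : y ∈ R (n + 1)
    · rw [if_pos hy, Finset.mul_sum]
      simp only [← mul_assoc]
      rw [ih (fun x => w y * M n y x), Finset.sum_filter]
      refine Finset.sum_congr rfl fun t _ => ?_
      have hcond : (∀ k : Fin (n + 2),
          (Fin.snocEquiv (fun k : Fin (n + 2) => S k)) (y, t) k ∈ R k)
          ↔ (∀ k : Fin (n + 1), t k ∈ R k) := by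
        simp only [Fin.snocEquiv_apply, Fin.forall_fin_succ', Fin.snoc_last, Fin.snoc_castSucc]
        exact and_iff_left hy
      rw [if_congr hcond rfl rfl]
      by_cases ht : ∀ k : Fin (n + 1), t k ∈ R k
      · rw [if_pos ht, if_pos ht]
        simp only [Fin.snocEquiv_apply]
        have h0 : (Fin.snoc (α := fun i : Fin (n + 2) => S i) t y ⟨0, Nat.succ_pos (n + 1)⟩)
            = t ⟨0, Nat.succ_pos n⟩ := hsnoc t y 0 (Nat.succ_pos n)
        have hlast : (Fin.snoc (α := fun i : Fin (n + 2) => S i) t y (Fin.last (n + 1))) = y :=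
          Fin.snoc_last (α := fun i : Fin (n + 2) => S i) (p := t) (x := y)
        have hprod : (∏ k : Fin (n + 1),
            M k (Fin.snoc (α := fun i : Fin (n + 2) => S i) t y ⟨k.val + 1, Nat.succ_lt_succ k.isLt⟩)
              (Fin.snoc (α := fun i : Fin (n + 2) => S i) t y ⟨k.val, Nat.lt_succ_of_lt k.isLt⟩))
            = (∏ k : Fin n, M k (t ⟨k.val + 1, Nat.succ_lt_succ k.isLt⟩) (t ⟨k.val, Nat.lt_succ_of_lt k.isLt⟩))
              * M n y (t (Fin.last n)) := by
          rw [Fin.prod_univ_castSucc]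
          congr 1
          · refine Finset.prod_congr rfl fun k _ => ?_
            simp only [Fin.coe_castSucc]
            rw [hsnoc t y (k.val + 1) (by omega), hsnoc t y k.val (by omega)]
          · have h2 : (Fin.snoc (α := fun i : Fin (n + 2) => S i) t y
                ⟨n + 1, by omega⟩) = y := Fin.snoc_last (α := fun i : Fin (n + 2) => S i) (p := t) (x := y)
            simp only [Fin.val_last]
            rw [hsnoc t y n (by omega), h2]
            rfl
        rw [hlast, h0, hprod]
        ring
      · rw [if_neg ht, if_neg ht]
    · rw [if_neg hy, mul_zero]
      refine (Finset.sum_eq_zero fun t _ => ?_).symm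
      refine if_neg fun h => hy ?_
      have := h (Fin.last (n + 1))
      simp only [Fin.snocEquiv_apply, Fin.snoc_last] at this
      exact this

/-- **Correctness of compiled variable elimination on a chain.**
For a chain-structured Bayesian network with finite nonempty state spaces `S k`,
initial weights `π`, transition matrices `M k`, and query regions `R k`, the column sum
of the final vector of the compiled variable-elimination program equals the constrained
trajectory sum
`∑_{t : ∀ k, t k ∈ R k} π (t 0) · ∏_{k < n} M k (t (k+1)) (t k)`. -/
theorem compiled_variable_elimination_correct
    (n : ℕ) (S : ℕ → Type)
    [∀ k, Fintype (S k)] [∀ k, Nonempty (S k)] [∀ k, DecidableEq (S k)]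
    (π : S 0 → ℝ≥0) (M : ∀ k, S (k + 1) → S k → ℝ≥0) (R : ∀ k, Finset (S k)) :
    ∑ y, VEvec S π M R n y
      = ∑ t ∈ Finset.univ.filter
            (fun t : (k : Fin (n + 1)) → S k => ∀ k : Fin (n + 1), t k ∈ R k),
          π (t ⟨0, Nat.succ_pos n⟩) *
            ∏ k : Fin n,
              M k (t ⟨k.val + 1, by omega⟩) (t ⟨k.val, by omega⟩) := by
  have := VE_weighted S π M R n (fun _ => 1)
  simpa using this
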